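/- For every m ≥ 1, if a nonempty palindrome w is a proper prefix of E_{2,m}, then w = E_{1,n} for some n with 1 ≤ n ≤ m; likewise, if a nonempty palindrome w is a proper suffix of E_{2,m}, then w = E_{1,n} for some n with 1 ≤ n ≤ m. -/

import Mathlib

/-- The alphabet: letters a, b (for the period-doubling sequence) and c (used by Θ₂). -/
inductive Letter : Type
  | a | b | c
deriving DecidableEq, Repr

open Letter

/-- The period-doubling substitution σ : a ↦ ab, b ↦ aa, extended to words
(the extra letter c is left untouched; it is never produced). -/
def sigmaw : List Letter → List Letter :=
  fun w => w.flatMap fun x => match x with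
    | .a => [.a, .b]
    | .b => [.a, .a]
    | .c => [.c]

/-- A_m = σ^m(a). -/
def A (m : ℕ) : List Letter := sigmaw^[m] [.a]

/-- B_m = σ^m(b). -/
def B (m : ℕ) : List Letter := sigmaw^[m] [.b]

/-- δ_m, the last letter of A_m. -/
def delta (m : ℕ) : Letter := (A m).getLastD .a

/-- The period-doubling sequence D, as a function giving its (n+1)-st letter
(0-indexed); it is the fixed point of σ beginning with a, and A_{n+1} is a
prefix of it of length 2^{n+1} > n. -/
def D (n : ℕ) : Letter := (A (n + 1)).getD n .a

/-- The finite segment D[i .. i+len−1] of the period-doubling sequence,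
with 1-based starting position i. -/
def Dseg (i len : ℕ) : List Letter := (List.range len).map fun k => D (i - 1 + k)

/-- u occurs in the finite word w at (1-based) position i. -/
def OccursAt {α : Type*} (u w : List α) (i : ℕ) : Prop :=
  1 ≤ i ∧ i - 1 + u.length ≤ w.length ∧ (w.drop (i - 1)).take u.length = u

/-- u is a factor of the finite word w. -/
def IsFactor {α : Type*} (u w : List α) : Prop := ∃ i, OccursAt u w i

/-- u occurs in the period-doubling sequence D at (1-based) position i. -/
def DOccursAt (u : List Letter) (i : ℕ) : Prop := 1 ≤ i ∧ Dseg i u.length = u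

/-- u is a factor of the period-doubling sequence D. -/
def FactorD (u : List Letter) : Prop := ∃ i, DOccursAt u i

/-- L(u,p): the starting position of the p-th occurrence (p ≥ 1) of u in D. -/
noncomputable def L (u : List Letter) (p : ℕ) : ℕ := Nat.nth (DOccursAt u) (p - 1)

/-- r_p(u): the p-th return word of u (p ≥ 1), i.e. D[L(u,p) .. L(u,p+1)−1];
r_0(u) is the prefix of D preceding the first occurrence of u. -/
noncomputable def r (u : List Letter) (p : ℕ) : List Letter :=
  if p = 0 then Dseg 1 (L u 1 - 1) else Dseg (L u p) (L u (p + 1) - L u p)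

/-- The morphism τ₁ : a ↦ a, b ↦ bb, extended to words. -/
def tau1 : List Letter → List Letter :=
  fun w => w.flatMap fun x => match x with
    | .a => [.a]
    | .b => [.b, .b]
    | .c => [.c]

/-- The morphism τ₂ : a ↦ ab, b ↦ acac, extended to words. -/
def tau2 : List Letter → List Letter :=
  fun w => w.flatMap fun x => match x with
    | .a => [.a, .b]
    | .b => [.a, .c, .a, .c]
    | .c => [.c]

/-- Θ₁[p], the p-th letter (p ≥ 1) of Θ₁ = τ₁(D): since |τ₁(w)| ≥ |w|, the p-th
letter of Θ₁ is the p-th letter of the image of the length-p prefix of D. -/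
def Theta1 (p : ℕ) : Letter := (tau1 (Dseg 1 p)).getD (p - 1) .a

/-- Θ₂[p], the p-th letter (p ≥ 1) of Θ₂ = τ₂(D). -/
def Theta2 (p : ℕ) : Letter := (tau2 (Dseg 1 p)).getD (p - 1) .a

/-- The envelope word E_{1,m} = A_m with its last letter δ_m deleted. -/
def E1 (m : ℕ) : List Letter := (A m).dropLast

/-- The envelope word E_{2,m} = B_m B_{m−1} with its last letter δ_m deleted. -/
def E2 (m : ℕ) : List Letter := (B m ++ B (m - 1)).dropLast

/-- Enumeration of the envelope words in the order
E_{1,1} ⊏ E_{2,1} ⊏ E_{1,2} ⊏ E_{2,2} ⊏ …. -/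
def Eword (k : ℕ) : List Letter := if k % 2 = 0 then E1 (k / 2 + 1) else E2 (k / 2 + 1)

/-- Env(u): the ⊏-least envelope word having u as a factor. -/
noncomputable def Env (u : List Letter) : List Letter :=
  Eword (sInf {k | IsFactor u (Eword k)})

/-- The letterwise complement exchanging a and b. -/
def comp : Letter → Letter
  | .a => .b
  | .b => .a
  | .c => .c

-- basic structure
lemma sigmaw_append (u v : List Letter) : sigmaw (u ++ v) = sigmaw u ++ sigmaw v :=
  List.flatMap_append

lemma iter_append (n : ℕ) (u v : List Letter) :
    sigmaw^[n] (u ++ v) = sigmaw^[n] u ++ sigmaw^[n] v := by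
  induction n generalizing u v with
  | zero => simp
  | succ n ih => simp [Function.iterate_succ_apply, sigmaw_append, ih]

lemma A_succ (n : ℕ) : A (n + 1) = A n ++ B n := by
  have : A (n + 1) = sigmaw^[n] (sigmaw [Letter.a]) := Function.iterate_succ_apply _ _ _
  rw [A, Function.iterate_succ_apply]
  show sigmaw^[n] (sigmaw [Letter.a]) = _
  have h : sigmaw [Letter.a] = [Letter.a] ++ [Letter.b] := rfl
  rw [h, iter_append]; rfl

lemma B_succ (n : ℕ) : B (n + 1) = A n ++ A n := by
  rw [B, Function.iterate_succ_apply]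
  show sigmaw^[n] (sigmaw [Letter.b]) = _
  have h : sigmaw [Letter.b] = [Letter.a] ++ [Letter.a] := rfl
  rw [h, iter_append]; rfl

lemma A_zero : A 0 = [Letter.a] := rfl
lemma B_zero : B 0 = [Letter.b] := rfl

lemma A_len (n : ℕ) : (A n).length = 2 ^ n ∧ (B n).length = 2 ^ n := by
  induction n with
  | zero => constructor <;> rfl
  | succ n ih =>
    constructor
    · rw [A_succ, List.length_append, ih.1, ih.2]; ring
    · rw [B_succ, List.length_append, ih.1]; ring

lemma A_length (n : ℕ) : (A n).length = 2 ^ n := (A_len n).1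
lemma B_length (n : ℕ) : (B n).length = 2 ^ n := (A_len n).2

lemma A_ne (n : ℕ) : A n ≠ [] := by
  intro h; have := A_length n; rw [h] at this; simp at this
  have : 0 < (2:ℕ) ^ n := Nat.pow_pos (by norm_num)
  omega

lemma B_ne (n : ℕ) : B n ≠ [] := by
  intro h; have := B_length n; rw [h] at this; simp at this
  have : 0 < (2:ℕ) ^ n := Nat.pow_pos (by norm_num)
  omega

lemma dropLast_AB (n : ℕ) : (B n).dropLast = (A n).dropLast := by
  induction n with
  | zero => rfl
  | succ n ih =>
    rw [A_succ, B_succ, List.dropLast_append, List.dropLast_append]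
    simp [List.isEmpty_iff, A_ne n, B_ne n, ih]

lemma E1_succ (n : ℕ) : E1 (n + 1) = A n ++ E1 n := by
  rw [E1, A_succ, List.dropLast_append]
  simp [List.isEmpty_iff, B_ne n, dropLast_AB, E1]

lemma A_eq_E1 (n : ℕ) : A n = E1 n ++ [delta n] := by
  have h := List.dropLast_concat_getLast (A_ne n)
  rw [E1, delta, List.getLastD_eq_getLast? , List.getLast?_eq_getLast (A_ne n)]
  simpa using h.symm

lemma E1_succ' (n : ℕ) : E1 (n + 1) = E1 n ++ [delta n] ++ E1 n := by
  rw [E1_succ, A_eq_E1 n]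

lemma E1_length (n : ℕ) : (E1 n).length = 2 ^ n - 1 := by
  rw [E1, List.length_dropLast, A_length]

lemma E1_pal (n : ℕ) : (E1 n).reverse = E1 n := by
  induction n with
  | zero => rfl
  | succ n ih => rw [E1_succ']; simp [ih]

lemma E2_eq (n : ℕ) : E2 (n + 1) = A n ++ A n ++ E1 n := by
  rw [E2, B_succ]
  simp only [Nat.add_sub_cancel]
  rw [List.dropLast_append]
  simp [List.isEmpty_iff, B_ne n, dropLast_AB, E1]

lemma E2_eq' (n : ℕ) : E2 (n + 1) = E1 (n + 1) ++ [delta n] ++ E1 n := by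
  rw [E2_eq, E1_succ', A_eq_E1 n]; simp

lemma E2_pal (n : ℕ) : (E2 (n + 1)).reverse = E2 (n + 1) := by
  rw [E2_eq, A_eq_E1 n]; simp [E1_pal n]

lemma E2_length (n : ℕ) : (E2 (n + 1)).length = 2 ^ n + 2 ^ n + (2 ^ n - 1) := by
  rw [E2_eq]; simp [A_length, E1_length, Nat.add_assoc]

lemma E1_prefix_E2 (n : ℕ) : E1 (n + 1) <+: E2 (n + 1) := by
  rw [E2_eq']; exact (List.prefix_append _ _).trans (List.prefix_append _ _) |>.trans (by rw [List.append_assoc])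

lemma A_prefix (m k : ℕ) (h : m ≤ k) : A m <+: A k := by
  induction k with
  | zero => interval_cases m; exact List.prefix_refl _
  | succ k ih =>
    rcases Nat.lt_or_ge m (k+1) with h'|h'
    · exact (ih (by omega)).trans (by rw [A_succ]; exact List.prefix_append _ _)
    · have : m = k + 1 := by omega
      subst this; exact List.prefix_refl _

-- no letter c
lemma no_cAB (n : ℕ) : (∀ x ∈ A n, x ≠ Letter.c) ∧ (∀ x ∈ B n, x ≠ Letter.c) := by
  induction n with
  | zero =>
    constructor <;> (intro x hx; simp [A_zero, B_zero] at hx; subst hx; simp)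
  | succ n ih =>
    constructor
    · intro x hx
      rw [A_succ] at hx
      rcases List.mem_append.mp hx with h | h
      · exact ih.1 x h
      · exact ih.2 x h
    · intro x hx
      rw [B_succ] at hx
      rcases List.mem_append.mp hx with h | h
      · exact ih.1 x h
      · exact ih.1 x h

lemma no_c (n : ℕ) : ∀ x ∈ A n, x ≠ Letter.c := (no_cAB n).1

-- sigmaw getD
lemma sigmaw_cons (x : Letter) (t : List Letter) :
    sigmaw (x :: t) = (match x with | .a => [Letter.a, Letter.b] | .b => [Letter.a, Letter.a] | .c => [Letter.c]) ++ sigmaw t :=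
  List.flatMap_cons ..

lemma sig_even (w : List Letter) (k : ℕ) (hc : ∀ x ∈ w, x ≠ Letter.c) :
    (sigmaw w).getD (2 * k) Letter.a = Letter.a := by
  induction w generalizing k with
  | nil => rfl
  | cons x t ih =>
    have hx : x ≠ Letter.c := hc x (by simp)
    have ht : ∀ y ∈ t, y ≠ Letter.c := fun y hy => hc y (by simp [hy])
    cases k with
    | zero =>
      cases x with
      | a => rfl
      | b => rfl
      | c => exact absurd rfl hx
    | succ k =>
      have h2 : 2 * (k + 1) = 2 + 2 * k := by ring
      cases x with
      | a =>
        rw [sigmaw_cons, h2, List.getD_append_right _ _ _ _ (by simp)]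
        simpa using ih k ht
      | b =>
        rw [sigmaw_cons, h2, List.getD_append_right _ _ _ _ (by simp)]
        simpa using ih k ht
      | c => exact absurd rfl hx

lemma sig_odd (w : List Letter) (k : ℕ) (hc : ∀ x ∈ w, x ≠ Letter.c) (hk : k < w.length) :
    (sigmaw w).getD (2 * k + 1) Letter.a = comp (w.getD k Letter.a) := by
  induction w generalizing k with
  | nil => simp at hk
  | cons x t ih =>
    have hx : x ≠ Letter.c := hc x (by simp)
    have ht : ∀ y ∈ t, y ≠ Letter.c := fun y hy => hc y (by simp [hy])
    cases k with
    | zero =>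
      cases x with
      | a => rfl
      | b => rfl
      | c => exact absurd rfl hx
    | succ k =>
      have hk' : k < t.length := by simpa using hk
      have h2 : 2 * (k + 1) + 1 = 2 + (2 * k + 1) := by ring
      have hg : (x :: t).getD (k+1) Letter.a = t.getD k Letter.a := rfl
      cases x with
      | a =>
        rw [sigmaw_cons, h2, List.getD_append_right _ _ _ _ (by simp), hg]
        simpa using ih k ht hk'
      | b =>
        rw [sigmaw_cons, h2, List.getD_append_right _ _ _ _ (by simp), hg]
        simpa using ih k ht hk'
      | c => exact absurd rfl hx


lemma getD_prefix {u v : List Letter} (h : u <+: v) {i : ℕ} (hi : i < u.length) :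
    u.getD i Letter.a = v.getD i Letter.a := by
  obtain ⟨t, rfl⟩ := h
  rw [List.getD_append _ _ _ _ hi]

lemma A_getD_D (m i : ℕ) (hi : i < 2 ^ m) : (A m).getD i Letter.a = D i := by
  rw [D]
  have h1 : i < 2 ^ (i + 1) := by
    calc i < i + 1 := Nat.lt_succ_self i
    _ ≤ 2 ^ (i+1) := Nat.le_of_lt ((Nat.lt_two_pow_self (n := i+1)))
  rcases Nat.le_total m (i + 1) with h | h
  · exact (getD_prefix (A_prefix m (i+1) h) (by rwa [A_length]))
  · exact (getD_prefix (A_prefix (i+1) m h) (by rwa [A_length])).symm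

lemma A_succ_sig (n : ℕ) : A (n + 1) = sigmaw (A n) := Function.iterate_succ_apply' _ _ _

lemma D_even (k : ℕ) : D (2 * k) = Letter.a := by
  rw [← A_getD_D (2*k+1) (2*k) (by have := (Nat.lt_two_pow_self (n := 2*k)); omega)]
  rw [A_succ_sig]
  exact sig_even (A (2*k)) k (no_c _)

lemma D_odd (k : ℕ) : D (2 * k + 1) = comp (D k) := by
  have hk : k < 2 ^ (2*k+1) := by have := (Nat.lt_two_pow_self (n := k)); calc k < 2^k := this
                                  _ ≤ 2 ^ (2*k+1) := Nat.pow_le_pow_right (by norm_num) (by omega)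
  have h1 : 2*k+1 < 2 ^ (2*k+2) := by have := (Nat.lt_two_pow_self (n := 2*k+1)); calc 2*k+1 < 2^(2*k+1) := this
                                      _ ≤ 2 ^ (2*k+2) := Nat.pow_le_pow_right (by norm_num) (by omega)
  rw [← A_getD_D (2*k+2) (2*k+1) h1, A_succ_sig, sig_odd (A (2*k+1)) k (no_c _) (by rwa [A_length]),
    A_getD_D (2*k+1) k hk]

lemma comp_inj {x y : Letter} (h : comp x = comp y) : x = y := by
  cases x <;> cases y <;> simp_all [comp]

lemma comp_eq_a {x : Letter} (h : comp x = Letter.a) : x = Letter.b := by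
  cases x <;> simp_all [comp]

lemma D_zero : D 0 = Letter.a := by have := D_even 0; norm_num at this; exact this

lemma D_one : D 1 = Letter.b := by
  have h := D_odd 0
  norm_num at h
  rw [h, D_zero]; rfl

lemma D_even' (k : ℕ) (hk : k % 2 = 0) : D k = Letter.a := by
  obtain ⟨t, rfl⟩ : ∃ t, k = 2 * t := ⟨k / 2, by omega⟩
  exact D_even t

/-- The key period lemma: no prefix of D of length 2^(j+1)-1 has a period q ≤ 2^j - 1. -/
lemma key_period : ∀ j q, 1 ≤ q → q < 2 ^ j →
    (∀ i, i + q < 2 ^ (j + 1) - 1 → D i = D (i + q)) → False := by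
  intro j
  induction j with
  | zero => intro q h1 h2; omega
  | succ j ih =>
    intro q h1 h2 H
    rcases Nat.even_or_odd q with ⟨r, hr⟩ | ⟨r, hr⟩
    · -- q = 2r, reduce
      have hr1 : 1 ≤ r := by omega
      have hr2 : r < 2 ^ j := by
        have : 2 ^ (j+1) = 2 * 2 ^ j := by ring
        omega
      apply ih r hr1 hr2
      intro i hi
      have h := H (2*i+1) (by
        have : 2 ^ (j+1+1) = 2 * 2 ^ (j+1) := by ring
        omega)
      rw [D_odd i] at h
      have : 2*i+1+q = 2*(i+r)+1 := by omega
      rw [this, D_odd (i+r)] at h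
      exact comp_inj h
    · -- q = 2r+1
      have h2j : (2:ℕ) ^ (j+1) ≥ 2 := by
        calc (2:ℕ) ^ (j+1) ≥ 2 ^ 1 := Nat.pow_le_pow_right (by norm_num) (by omega)
        _ = 2 := by norm_num
      rcases Nat.even_or_odd r with ⟨s, hs⟩ | ⟨s, hs⟩
      · -- r even: use i = 0
        have h := H 0 (by omega)
        rw [show (0:ℕ) = 2*0 from rfl, D_even] at h
        rw [show 2*0+q = 2*r+1 by omega, D_odd] at h
        have : D r = Letter.b := comp_eq_a h.symm
        rw [D_even' r (by omega)] at this
        exact absurd this (by simp)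
      · -- r odd: use i = 2
        rcases Nat.eq_or_lt_of_le h1 with hq1 | hq2
        · -- q = 1 impossible since r odd means q = 2r+1 ≥ 3
          omega
        have hj2 : 2 ≤ j + 1 := by
          by_contra hc
          have : j = 0 := by omega
          rw [this] at h2
          omega
        have hpow : (2:ℕ) ^ (j+1) ≥ 4 := by
          calc (2:ℕ) ^ (j+1) ≥ 2 ^ 2 := Nat.pow_le_pow_right (by norm_num) hj2
          _ = 4 := by norm_num
        have h := H 2 (by
          have : 2 ^ (j+1+1) = 2 * 2 ^ (j+1) := by ring
          omega)
        rw [show (2:ℕ) = 2*1 from rfl, D_even] at h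
        rw [show 2*1+q = 2*(r+1)+1 by omega, D_odd] at h
        have : D (r+1) = Letter.b := comp_eq_a h.symm
        rw [D_even' (r+1) (by omega)] at this
        exact absurd this (by simp)


lemma E1_getD (m i : ℕ) (hi : i < 2 ^ m - 1) : (E1 m).getD i Letter.a = D i := by
  have hpre : E1 m <+: A m := by rw [E1]; exact List.dropLast_prefix _
  rw [getD_prefix hpre (by rw [E1_length]; omega)]
  exact A_getD_D m i (by have : (1:ℕ) ≤ 2 ^ m := Nat.one_le_two_pow; omega)

lemma E2_getD (m i : ℕ) (hi : i < 2 ^ (m + 1) - 1) : (E2 (m + 1)).getD i Letter.a = D i := by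
  rw [← getD_prefix (E1_prefix_E2 m) (by rw [E1_length]; omega)]
  exact E1_getD (m+1) i hi

lemma border_period (u w : List Letter) (hp : w <+: u) (hs : w <:+ u) (i : ℕ)
    (hi : i + (u.length - w.length) < u.length) :
    u.getD i Letter.a = u.getD (i + (u.length - w.length)) Letter.a := by
  obtain ⟨t, ht⟩ := hp
  obtain ⟨v, hv⟩ := hs
  have hwle : w.length ≤ u.length := by rw [← ht]; simp
  have hvlen : v.length = u.length - w.length := by
    have := congrArg List.length hv
    simp at this
    omega
  have hiw : i < w.length := by omega
  have h1 : u.getD i Letter.a = w.getD i Letter.a := by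
    rw [← ht, List.getD_append _ _ _ _ hiw]
  have h2 : u.getD (i + (u.length - w.length)) Letter.a = w.getD i Letter.a := by
    rw [← hvlen, ← hv, List.getD_append_right _ _ _ _ (by omega)]
    congr 1
    omega
  rw [h1, h2]

lemma no_border_gen (u : List Letter) (m : ℕ) (w : List Letter)
    (hlen : 2 ^ (m + 1) - 1 ≤ u.length)
    (hD : ∀ i, i < 2 ^ (m + 1) - 1 → u.getD i Letter.a = D i)
    (hp : w <+: u) (hs : w <:+ u)
    (hq1 : 1 ≤ u.length - w.length) (hq2 : u.length - w.length < 2 ^ m) : False := by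
  apply key_period m (u.length - w.length) hq1 hq2
  intro i hi
  rw [← hD i (by omega), ← hD (i + (u.length - w.length)) hi]
  exact border_period u w hp hs i (by omega)

lemma pal_prefix_suffix {w P : List Letter} (hw : w.reverse = w) (hP : P.reverse = P)
    (hp : w <+: P) : w <:+ P := by
  have := List.reverse_suffix.mpr hp
  rwa [hw, hP] at this

lemma E1_one : E1 1 = [Letter.a] := rfl

lemma E1_classify : ∀ m, 1 ≤ m → ∀ w : List Letter, w ≠ [] → w.reverse = w →
    w <+: E1 m → ∃ n, 1 ≤ n ∧ n ≤ m ∧ w = E1 n := by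
  intro m
  induction m with
  | zero => omega
  | succ m ih =>
    intro _ w hne hpal hp
    rcases Nat.eq_zero_or_pos m with rfl | hm
    · -- m + 1 = 1
      refine ⟨1, le_refl 1, le_refl 1, ?_⟩
      rw [E1_one] at hp ⊢
      have h1 : 1 ≤ w.length := by
        cases w with
        | nil => exact absurd rfl hne
        | cons x t => simp
      have h2 : w.length ≤ 1 := by simpa using hp.length_le
      exact hp.eq_of_length (by simp; omega)
    · have hwlen : w.length ≤ 2 ^ (m+1) - 1 := by
        have := hp.length_le
        rwa [E1_length] at this
      rcases Nat.lt_or_ge (2 ^ m - 1) w.length with hbig | hsmall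
      · rcases Nat.eq_or_lt_of_le hwlen with heq | hlt
        · exact ⟨m + 1, by omega, le_refl _, hp.eq_of_length (by rw [E1_length, heq])⟩
        · exfalso
          have hs : w <:+ E1 (m+1) := pal_prefix_suffix hpal (E1_pal (m+1)) hp
          refine no_border_gen (E1 (m+1)) m w (by rw [E1_length]) ?_ hp hs ?_ ?_
          · intro i hi; exact E1_getD (m+1) i hi
          · rw [E1_length]; omega
          · rw [E1_length]
            have : (1:ℕ) ≤ 2 ^ m := Nat.one_le_two_pow
            omega
      · have hpm : w <+: E1 m := by
          refine List.prefix_of_prefix_length_le hp ?_ ?_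
          · calc E1 m <+: A m := by rw [E1]; exact List.dropLast_prefix _
            _ <+: A m ++ E1 m := List.prefix_append _ _
            _ = E1 (m+1) := (E1_succ m).symm
          · rw [E1_length]; omega
        obtain ⟨n, hn1, hn2, hn3⟩ := ih hm w hne hpal hpm
        exact ⟨n, hn1, by omega, hn3⟩

/-- For every m ≥ 1, every nonempty palindromic proper prefix
(resp. proper suffix) of E_{2,m} equals E_{1,n} for some 1 ≤ n ≤ m. -/
theorem palindromic_proper_prefix_suffix_E2 (m : ℕ) (hm : 1 ≤ m) (w : List Letter)
    (hne : w ≠ []) (hpal : w.reverse = w) :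
    (w <+: E2 m → w ≠ E2 m → ∃ n, 1 ≤ n ∧ n ≤ m ∧ w = E1 n) ∧
    (w <:+ E2 m → w ≠ E2 m → ∃ n, 1 ≤ n ∧ n ≤ m ∧ w = E1 n) := by
  obtain ⟨n, rfl⟩ : ∃ n, m = n + 1 := ⟨m - 1, by omega⟩
  have hpow : (1:ℕ) ≤ 2 ^ n := Nat.one_le_two_pow
  have main : w <+: E2 (n+1) → w ≠ E2 (n+1) → ∃ k, 1 ≤ k ∧ k ≤ n + 1 ∧ w = E1 k := by
    intro hp hne2
    have hwlen : w.length ≤ (E2 (n+1)).length := hp.length_le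
    have hlt : w.length < (E2 (n+1)).length := by
      rcases Nat.eq_or_lt_of_le hwlen with heq | h
      · exact absurd (hp.eq_of_length heq) hne2
      · exact h
    rcases le_or_gt w.length (2 ^ (n+1) - 1) with hsmall | hbig
    · refine E1_classify (n+1) (by omega) w hne hpal ?_
      exact List.prefix_of_prefix_length_le hp (E1_prefix_E2 n) (by rw [E1_length]; omega)
    · exfalso
      have hs : w <:+ E2 (n+1) := pal_prefix_suffix hpal (E2_pal n) hp
      refine no_border_gen (E2 (n+1)) n w ?_ ?_ hp hs ?_ ?_
      · rw [E2_length]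
        have : 2 ^ (n+1) = 2 * 2 ^ n := by ring
        omega
      · intro i hi; exact E2_getD n i hi
      · omega
      · rw [E2_length] at hlt
        rw [E2_length]
        have : 2 ^ (n+1) = 2 * 2 ^ n := by ring
        omega
  constructor
  · exact main
  · intro hs hne2
    exact main (by
      have := List.reverse_prefix.mpr hs
      rwa [hpal, E2_pal n] at this) hne2
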